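/- Let G be a chordal graph on 2n vertices that admits a partition (V1, V2) where G[V1] is isomorphic to the complement of G[V2] and the crossing edges form a perfect matching. Then G is isomorphic to the graph K_n\overline{K_n} obtained from a clique on n vertices and an independent set on n vertices joined by a perfect matching. -/

import Mathlib

open SimpleGraph

/-- The split graph `Kₙ∂Kₙ`: a clique on `n` vertices, an independent set on `n`
vertices, and a perfect matching between them. -/
def splitMatch (n : ℕ) : SimpleGraph (Fin n ⊕ Fin n) where
  Adj x y :=
    match x, y with
    | Sum.inl i, Sum.inl j => i ≠ j
    | Sum.inl i, Sum.inr j => i = j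
    | Sum.inr i, Sum.inl j => i = j
    | Sum.inr _, Sum.inr _ => False
  symm := by constructor; rintro (i|i) (j|j) h <;> simp_all <;> omega
  loopless := by constructor; rintro (i|i) h <;> simp_all

/-- `(V1, V1ᶜ)` is a perfect matching cut of `G`. -/
def IsPerfectMatchingCut {V : Type*} (G : SimpleGraph V) (V1 : Set V) : Prop :=
  ∀ v : V, ∃! w : V, G.Adj v w ∧ (v ∈ V1 ↔ w ∉ V1)

set_option maxRecDepth 8000

/-- If `v w` lie on the same side `S` of the matching cut and both `v w` and their
matching partners `M v, M w` are adjacent, then `G` contains an induced 4-cycle. -/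
lemma auxC4 {V : Type*} (G : SimpleGraph V) (M : V → V)
    (hchordal : ∀ k : ℕ, 4 ≤ k → IsEmpty (cycleGraph k ↪g G))
    (S : Set V) (hM1 : ∀ v, G.Adj v (M v)) (hMM : ∀ v, M (M v) = v)
    (hS : ∀ v, v ∈ S ↔ M v ∉ S)
    (hcross : ∀ v w, G.Adj v w → (v ∈ S ↔ w ∉ S) → w = M v)
    {v w : V} (hv : v ∈ S) (hw : w ∈ S) (hvw : v ≠ w)
    (h1 : G.Adj v w) (h2 : G.Adj (M v) (M w)) : False := by
  have hMv : M v ∉ S := (hS v).mp hv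
  have hMw : M w ∉ S := (hS w).mp hw
  have hMinj : Function.Injective M := Function.LeftInverse.injective hMM
  have na1 : ¬ G.Adj v (M w) := fun h =>
    hvw ((hMinj (hcross v (M w) h (by tauto))).symm)
  have na2 : ¬ G.Adj w (M v) := fun h =>
    hvw ((hMinj (hcross w (M v) h (by tauto))))
  have hvMw : v ≠ M w := fun h => hMw (h ▸ hv)
  have hvMv : v ≠ M v := fun h => hMv (h ▸ hv)
  have hwMw : w ≠ M w := fun h => hMw (h ▸ hw)
  have hwMv : w ≠ M v := fun h => hMv (h ▸ hw)
  have hMvMw : M v ≠ M w := fun h => hvw (hMinj h)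
  let f : Fin 4 → V := ![v, w, M w, M v]
  have hinj : Function.Injective f := by
    intro a b hab
    fin_cases a <;> fin_cases b <;>
      simp only [f, Matrix.cons_val_zero, Matrix.cons_val_one, Matrix.head_cons,
        Matrix.cons_val_two, Matrix.tail_cons, Matrix.cons_val_three, Fin.mk.injEq,
        Fin.isValue] at hab ⊢ <;>
      first
        | rfl
        | exact absurd hab (by assumption)
        | exact absurd hab.symm (by assumption)
  have emb : cycleGraph 4 ↪g G := by
    refine ⟨⟨f, hinj⟩, ?_⟩
    intro a b
    simp only [Function.Embedding.coeFn_mk]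
    fin_cases a <;> fin_cases b <;>
      simp only [f, Matrix.cons_val_zero, Matrix.cons_val_one, Matrix.head_cons,
        Matrix.cons_val_two, Matrix.tail_cons, Matrix.cons_val_three, Fin.isValue] <;>
      first
        | exact iff_of_false G.irrefl (by decide)
        | exact iff_of_true h1 (by decide)
        | exact iff_of_true h1.symm (by decide)
        | exact iff_of_true (hM1 w) (by decide)
        | exact iff_of_true (hM1 w).symm (by decide)
        | exact iff_of_true h2.symm (by decide)
        | exact iff_of_true h2 (by decide)
        | exact iff_of_true (hM1 v).symm (by decide)
        | exact iff_of_true (hM1 v) (by decide)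
        | exact iff_of_false na1 (by decide)
        | exact iff_of_false (fun h => na1 h.symm) (by decide)
        | exact iff_of_false na2 (by decide)
        | exact iff_of_false (fun h => na2 h.symm) (by decide)
  exact (hchordal 4 le_rfl).elim emb

/-- An induced path `x - y - z` on one side `S` whose endpoints' partners are
adjacent yields an induced 5-cycle. -/
lemma auxC5 {V : Type*} (G : SimpleGraph V) (M : V → V)
    (hchordal : ∀ k : ℕ, 4 ≤ k → IsEmpty (cycleGraph k ↪g G))
    (S : Set V) (hM1 : ∀ v, G.Adj v (M v)) (hMM : ∀ v, M (M v) = v)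
    (hS : ∀ v, v ∈ S ↔ M v ∉ S)
    (hcross : ∀ v w, G.Adj v w → (v ∈ S ↔ w ∉ S) → w = M v)
    {x y z : V} (hx : x ∈ S) (hy : y ∈ S) (hz : z ∈ S)
    (hxy : x ≠ y) (hyz : y ≠ z) (hxz : x ≠ z)
    (h1 : G.Adj x y) (h2 : G.Adj y z) (h3 : ¬ G.Adj x z)
    (h4 : G.Adj (M x) (M z)) : False := by
  have hMx : M x ∉ S := (hS x).mp hx
  have hMy : M y ∉ S := (hS y).mp hy
  have hMz : M z ∉ S := (hS z).mp hz
  have hMinj : Function.Injective M := Function.LeftInverse.injective hMM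
  have na03 : ¬ G.Adj x (M z) := fun h =>
    hxz ((hMinj (hcross x (M z) h (by tauto))).symm)
  have na13 : ¬ G.Adj y (M z) := fun h =>
    hyz ((hMinj (hcross y (M z) h (by tauto))).symm)
  have na14 : ¬ G.Adj y (M x) := fun h =>
    hxy ((hMinj (hcross y (M x) h (by tauto))))
  have na24 : ¬ G.Adj z (M x) := fun h =>
    hxz ((hMinj (hcross z (M x) h (by tauto))))
  have d1 : x ≠ M z := fun h => hMz (h ▸ hx)
  have d2 : x ≠ M x := fun h => hMx (h ▸ hx)
  have d3 : y ≠ M z := fun h => hMz (h ▸ hy)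
  have d4 : y ≠ M x := fun h => hMx (h ▸ hy)
  have d5 : z ≠ M z := fun h => hMz (h ▸ hz)
  have d6 : z ≠ M x := fun h => hMx (h ▸ hz)
  have d7 : M z ≠ M x := fun h => hxz (hMinj h).symm
  let f : Fin 5 → V := ![x, y, z, M z, M x]
  have hinj : Function.Injective f := by
    intro a b hab
    fin_cases a <;> fin_cases b <;>
      simp only [f, Matrix.cons_val_zero, Matrix.cons_val_one, Matrix.head_cons,
        Matrix.cons_val_two, Matrix.tail_cons, Matrix.cons_val_three,
        Matrix.cons_val_four, Fin.mk.injEq, Fin.isValue] at hab ⊢ <;>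
      first
        | rfl
        | exact absurd hab (by assumption)
        | exact absurd hab.symm (by assumption)
  have emb : cycleGraph 5 ↪g G := by
    refine ⟨⟨f, hinj⟩, ?_⟩
    intro a b
    simp only [Function.Embedding.coeFn_mk]
    fin_cases a <;> fin_cases b <;>
      simp only [f, Matrix.cons_val_zero, Matrix.cons_val_one, Matrix.head_cons,
        Matrix.cons_val_two, Matrix.tail_cons, Matrix.cons_val_three,
        Matrix.cons_val_four, Fin.isValue] <;>
      first
        | exact iff_of_false G.irrefl (by decide)
        | exact iff_of_true h1 (by decide)
        | exact iff_of_true h1.symm (by decide)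
        | exact iff_of_true h2 (by decide)
        | exact iff_of_true h2.symm (by decide)
        | exact iff_of_true (hM1 z) (by decide)
        | exact iff_of_true (hM1 z).symm (by decide)
        | exact iff_of_true h4.symm (by decide)
        | exact iff_of_true h4 (by decide)
        | exact iff_of_true (hM1 x).symm (by decide)
        | exact iff_of_true (hM1 x) (by decide)
        | exact iff_of_false h3 (by decide)
        | exact iff_of_false (fun h => h3 h.symm) (by decide)
        | exact iff_of_false na03 (by decide)
        | exact iff_of_false (fun h => na03 h.symm) (by decide)
        | exact iff_of_false na13 (by decide)
        | exact iff_of_false (fun h => na13 h.symm) (by decide)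
        | exact iff_of_false na14 (by decide)
        | exact iff_of_false (fun h => na14 h.symm) (by decide)
        | exact iff_of_false na24 (by decide)
        | exact iff_of_false (fun h => na24 h.symm) (by decide)
  exact (hchordal 5 (by norm_num)).elim emb

/-- If `S` is a clique, `Sᶜ` is independent and the cut edges form a perfect
matching, then `G` is the split-matching graph. -/
lemma auxFinal {V : Type*} (G : SimpleGraph V) (M : V → V) (S : Set V) (n : ℕ)
    (hM1 : ∀ v, G.Adj v (M v)) (hMM : ∀ v, M (M v) = v)
    (hS : ∀ v, v ∈ S ↔ M v ∉ S)
    (hcross : ∀ v w, G.Adj v w → (v ∈ S ↔ w ∉ S) → w = M v)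
    (hclique : ∀ v w, v ∈ S → w ∈ S → v ≠ w → G.Adj v w)
    (hindep : ∀ v w, v ∉ S → w ∉ S → ¬ G.Adj v w)
    (eS : {v // v ∈ S} ≃ Fin n) :
    Nonempty (G ≃g splitMatch n) := by
  classical
  have hMmem : ∀ v, v ∉ S → M v ∈ S := fun v hv => by have := hS v; tauto
  let f : V → Fin n ⊕ Fin n := fun v =>
    if h : v ∈ S then Sum.inl (eS ⟨v, h⟩) else Sum.inr (eS ⟨M v, hMmem v h⟩)
  let g : Fin n ⊕ Fin n → V := fun x =>
    match x with
    | Sum.inl i => (eS.symm i : V)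
    | Sum.inr i => M (eS.symm i : V)
  have hgf : Function.LeftInverse g f := by
    intro v
    by_cases h : v ∈ S
    · simp [f, g, h]
    · simp [f, g, h, hMM]
  have hfg : Function.RightInverse g f := by
    rintro (i | i)
    · have hm : ((eS.symm i : {v // v ∈ S}) : V) ∈ S := (eS.symm i).2
      simp [f, g, hm]
    · have hm : M ((eS.symm i : {v // v ∈ S}) : V) ∉ S := (hS _).mp (eS.symm i).2
      simp only [f, g, dif_neg hm]
      have heq : (⟨M (M ((eS.symm i : {v // v ∈ S}) : V)), hMmem _ hm⟩ : {v // v ∈ S})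
          = eS.symm i := Subtype.ext (by simp [hMM])
      rw [heq, eS.apply_symm_apply]
  refine ⟨⟨⟨f, g, hgf, hfg⟩, ?_⟩⟩
  intro a b
  simp only [Equiv.coe_fn_mk]
  by_cases ha : a ∈ S <;> by_cases hb : b ∈ S
  · simp only [f, dif_pos ha, dif_pos hb]
    show eS ⟨a, ha⟩ ≠ eS ⟨b, hb⟩ ↔ G.Adj a b
    constructor
    · intro h
      exact hclique a b ha hb (fun hh => h (congrArg eS (Subtype.ext hh)))
    · intro h hh
      exact h.ne (congrArg Subtype.val (eS.injective hh))
  · simp only [f, dif_pos ha, dif_neg hb]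
    show eS ⟨a, ha⟩ = eS ⟨M b, hMmem b hb⟩ ↔ G.Adj a b
    constructor
    · intro h
      have : a = M b := congrArg Subtype.val (eS.injective h)
      rw [this]
      exact (hM1 b).symm
    · intro h
      exact congrArg eS (Subtype.ext (hcross b a h.symm (by tauto)))
  · simp only [f, dif_neg ha, dif_pos hb]
    show eS ⟨M a, hMmem a ha⟩ = eS ⟨b, hb⟩ ↔ G.Adj a b
    constructor
    · intro h
      have : M a = b := congrArg Subtype.val (eS.injective h)
      rw [← this]
      exact hM1 a
    · intro h
      exact congrArg eS (Subtype.ext (hcross a b h (by tauto)).symm)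
  · simp only [f, dif_neg ha, dif_neg hb]
    show False ↔ G.Adj a b
    simp [hindep a b ha hb]

/-- A chordal graph on `2n` vertices admitting a complementary decomposition with a
perfect matching cut is isomorphic to `Kₙ∂Kₙ`. -/
theorem chordal_comp_sub_pm {V : Type*} [Fintype V] (G : SimpleGraph V) (n : ℕ)
    (hcard : Fintype.card V = 2 * n)
    (hchordal : ∀ k : ℕ, 4 ≤ k → IsEmpty (cycleGraph k ↪g G))
    (V1 : Set V)
    (hcut : IsPerfectMatchingCut G V1)
    (hiso : Nonempty (G.induce V1 ≃g (G.induce V1ᶜ)ᶜ)) :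
    Nonempty (G ≃g splitMatch n) := by
  classical
  obtain ⟨φ⟩ := hiso
  choose M hM using fun v => (hcut v).exists
  have hM1 : ∀ v, G.Adj v (M v) := fun v => (hM v).1
  have hM2 : ∀ v, v ∈ V1 ↔ M v ∉ V1 := fun v => (hM v).2
  have hcross : ∀ v w, G.Adj v w → (v ∈ V1 ↔ w ∉ V1) → w = M v := by
    intro v w h1 h2
    exact (hcut v).unique ⟨h1, h2⟩ ⟨hM1 v, hM2 v⟩
  have hMM : ∀ v, M (M v) = v := by
    intro v
    exact (hcross (M v) v (hM1 v).symm (by have := hM2 v; tauto)).symm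
  have hMinj : Function.Injective M := Function.LeftInverse.injective hMM
  -- complement-side versions
  have hSc : ∀ v, v ∈ V1ᶜ ↔ M v ∉ V1ᶜ := by
    intro v
    simp only [Set.mem_compl_iff]
    have := hM2 v; tauto
  have hcrossC : ∀ v w, G.Adj v w → (v ∈ V1ᶜ ↔ w ∉ V1ᶜ) → w = M v := by
    intro v w h1 h2
    simp only [Set.mem_compl_iff] at h2
    exact hcross v w h1 (by tauto)
  -- no C4: adjacent same-side pairs have non-adjacent partners
  have hC4 : ∀ v w, v ∈ V1 → w ∈ V1 → G.Adj v w → ¬ G.Adj (M v) (M w) := by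
    intro v w hv hw h1 h2
    exact auxC4 G M hchordal V1 hM1 hMM hM2 hcross hv hw h1.ne h1 h2
  have hC4c : ∀ v w, v ∉ V1 → w ∉ V1 → G.Adj v w → ¬ G.Adj (M v) (M w) := by
    intro v w hv hw h1 h2
    exact auxC4 G M hchordal V1ᶜ hM1 hMM hSc hcrossC hv hw h1.ne h1 h2
  -- the surjectivity (counting) argument on the complement side
  have hMmemC : ∀ v, v ∉ V1 → M v ∈ V1 := fun v hv => by have := hM2 v; tauto
  have hsurj : ∀ p q : V, p ∉ V1 → q ∉ V1 → p ≠ q → ¬ G.Adj p q → G.Adj (M p) (M q) := by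
    intro p q hp hq hpq hnadj
    have hadj_of : ∀ a b : ↥(V1ᶜ), a ≠ b → ¬ G.Adj a.1 b.1 →
        G.Adj (φ.symm a : V) (φ.symm b : V) := by
      intro a b hne hna
      have h := φ.map_rel_iff (a := φ.symm a) (b := φ.symm b)
      simp only [RelIso.apply_symm_apply] at h
      have hc : ((G.induce V1ᶜ)ᶜ).Adj a b := by
        simp only [compl_adj, comap_adj, Function.Embedding.coe_subtype]
        exact ⟨hne, hna⟩
      have := h.mp hc
      simpa only [comap_adj, Function.Embedding.coe_subtype] using this
    have hmem : ∀ a : ↥V1, M a.1 ∈ V1ᶜ := fun a => (hM2 a.1).mp a.2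
    have hsymm_inj : ∀ a b : ↥(V1ᶜ), (φ.symm a : V) = (φ.symm b : V) → a = b := by
      intro a b h
      exact φ.symm.toEquiv.injective (Subtype.ext h)
    let T := {pq : ↥(V1ᶜ) × ↥(V1ᶜ) // pq.1 ≠ pq.2 ∧ ¬ G.Adj pq.1.1 pq.2.1}
    let F : T → T := fun t =>
      ⟨(⟨M (φ.symm t.1.1 : V), hmem _⟩, ⟨M (φ.symm t.1.2 : V), hmem _⟩), by
        refine ⟨?_, ?_⟩
        · intro h
          exact t.2.1 (hsymm_inj _ _ (hMinj (congrArg Subtype.val h)))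
        · exact hC4 _ _ (φ.symm t.1.1).2 (φ.symm t.1.2).2
            (hadj_of _ _ t.2.1 t.2.2)⟩
    have hFinj : Function.Injective F := by
      intro t1 t2 h
      have h1 : M (φ.symm t1.1.1 : V) = M (φ.symm t2.1.1 : V) := by
        have := congrArg (fun t : T => (t.1.1 : V)) h
        simpa [F] using this
      have h2 : M (φ.symm t1.1.2 : V) = M (φ.symm t2.1.2 : V) := by
        have := congrArg (fun t : T => (t.1.2 : V)) h
        simpa [F] using this
      apply Subtype.ext
      apply Prod.ext
      · exact hsymm_inj _ _ (hMinj h1)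
      · exact hsymm_inj _ _ (hMinj h2)
    have hFbij : Function.Bijective F := Finite.injective_iff_bijective.mp hFinj
    obtain ⟨t0, ht0⟩ := hFbij.2 ⟨(⟨p, hp⟩, ⟨q, hq⟩),
      fun h => hpq (congrArg Subtype.val h), hnadj⟩
    have e1 : M (φ.symm t0.1.1 : V) = p := congrArg (fun t : T => (t.1.1 : V)) ht0
    have e2 : M (φ.symm t0.1.2 : V) = q := congrArg (fun t : T => (t.1.2 : V)) ht0
    have e1' : (φ.symm t0.1.1 : V) = M p := by rw [← e1, hMM]
    have e2' : (φ.symm t0.1.2 : V) = M q := by rw [← e2, hMM]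
    have := hadj_of t0.1.1 t0.1.2 t0.2.1 t0.2.2
    rwa [e1', e2'] at this
  -- adjacency of partners of same-side non-adjacent pairs, V1 side
  have hcompl1 : ∀ x z, x ∈ V1 → z ∈ V1 → x ≠ z → ¬ G.Adj x z → G.Adj (M x) (M z) := by
    intro x z hx hz hxz hna
    by_contra hno
    have h := hsurj (M x) (M z) ((hM2 x).mp hx) ((hM2 z).mp hz)
      (fun h => hxz (hMinj h)) hno
    rw [hMM, hMM] at h
    exact hna h
  -- transitivity of adjacency on each side
  have transE1 : ∀ x y z, x ∈ V1 → y ∈ V1 → z ∈ V1 →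
      G.Adj x y → G.Adj y z → x ≠ z → G.Adj x z := by
    intro x y z hx hy hz h1 h2 hxz
    by_contra h3
    exact auxC5 G M hchordal V1 hM1 hMM hM2 hcross hx hy hz h1.ne h2.ne hxz h1 h2 h3
      (hcompl1 x z hx hz hxz h3)
  have transE2 : ∀ x y z, x ∉ V1 → y ∉ V1 → z ∉ V1 →
      G.Adj x y → G.Adj y z → x ≠ z → G.Adj x z := by
    intro x y z hx hy hz h1 h2 hxz
    by_contra h3
    exact auxC5 G M hchordal V1ᶜ hM1 hMM hSc hcrossC hx hy hz h1.ne h2.ne hxz h1 h2 h3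
      (hsurj x z hx hz hxz h3)
  -- transitivity of non-adjacency on V1
  have transN1 : ∀ x y z, x ∈ V1 → y ∈ V1 → z ∈ V1 → x ≠ y → y ≠ z → x ≠ z →
      ¬ G.Adj x y → ¬ G.Adj y z → ¬ G.Adj x z := by
    intro x y z hx hy hz hxy hyz hxz n1 n2 hadj
    have a1 := hcompl1 x y hx hy hxy n1
    have a2 := hcompl1 y z hy hz hyz n2
    have hq : G.Adj (M x) (M z) := transE2 (M x) (M y) (M z) ((hM2 x).mp hx)
      ((hM2 y).mp hy) ((hM2 z).mp hz) a1 a2 (fun h => hxz (hMinj h))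
    exact hC4 x z hx hz hadj hq
  -- if V1 contains an edge and a non-edge we get a contradiction
  have caseA : ∀ a b c, a ∈ V1 → b ∈ V1 → c ∈ V1 →
      G.Adj a b → ¬ G.Adj a c → a ≠ c → False := by
    intro a b c ha hb hc hab hnac hac
    by_cases hbc : b = c
    · exact hnac (hbc ▸ hab)
    by_cases h : G.Adj b c
    · exact hnac (transE1 a b c ha hb hc hab h hac)
    · exact transN1 a c b ha hc hb hac (fun hh => hbc hh.symm) hab.ne hnac
        (fun hh => h hh.symm) hab
  have contra : ∀ x y u w, x ∈ V1 → y ∈ V1 → u ∈ V1 → w ∈ V1 →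
      G.Adj x y → u ≠ w → ¬ G.Adj u w → False := by
    intro x y u w hx hy hu hw hadj hne hnadj
    by_cases h1 : u = x
    · exact caseA x y w hx hy hw hadj (h1 ▸ hnadj) (h1 ▸ hne)
    by_cases h2 : u = y
    · exact caseA y x w hy hx hw hadj.symm (h2 ▸ hnadj) (h2 ▸ hne)
    by_cases h3 : G.Adj x u
    · exact caseA u x w hu hx hw h3.symm hnadj hne
    · exact caseA x y u hx hy hu hadj h3 (fun h => h1 h.symm)
  -- cardinalities
  have E : ↥V1 ≃ ↥(V1ᶜ) :=
    { toFun := fun x => ⟨M x.1, (hM2 x.1).mp x.2⟩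
      invFun := fun y => ⟨M y.1, hMmemC y.1 y.2⟩
      left_inv := fun x => Subtype.ext (hMM x.1)
      right_inv := fun y => Subtype.ext (hMM y.1) }
  have hcards : Fintype.card ↥V1 + Fintype.card ↥(V1ᶜ) = Fintype.card V := by
    have h := Fintype.card_congr (Equiv.sumCompl (· ∈ V1))
    rw [Fintype.card_sum] at h
    have e2 : ↥(V1ᶜ) ≃ {x // ¬ x ∈ V1} := Equiv.subtypeEquivRight (fun x => Iff.rfl)
    rw [Fintype.card_congr e2]
    convert h using 2 <;> exact Subsingleton.elim _ _
  have hEcard : Fintype.card ↥V1 = Fintype.card ↥(V1ᶜ) := Fintype.card_congr E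
  have hcV : Fintype.card ↥V1 = n := by omega
  have hcVc : Fintype.card ↥(V1ᶜ) = n := by omega
  -- final case split
  by_cases hcl : ∀ v w : V, v ∈ V1 → w ∈ V1 → v ≠ w → G.Adj v w
  · -- V1 is a clique, V1ᶜ independent
    have hind : ∀ v w, v ∉ V1 → w ∉ V1 → ¬ G.Adj v w := by
      intro v w hv hw hadj
      exact hC4c v w hv hw hadj (hcl (M v) (M w) (hMmemC v hv) (hMmemC w hw)
        (fun h => hadj.ne (hMinj h)))
    exact auxFinal G M V1 n hM1 hMM hM2 hcross hcl hind (Fintype.equivFinOfCardEq hcV)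
  · -- V1 is independent, V1ᶜ a clique
    push_neg at hcl
    obtain ⟨x, y, hx, hy, hxy, hnxy⟩ := hcl
    have hind1 : ∀ v w, v ∈ V1 → w ∈ V1 → ¬ G.Adj v w := by
      intro v w hv hw hadj
      exact contra v w x y hv hw hx hy hadj hxy hnxy
    have hclc : ∀ v w, v ∈ V1ᶜ → w ∈ V1ᶜ → v ≠ w → G.Adj v w := by
      intro v w hv hw hne
      by_contra hno
      exact hind1 (M v) (M w) (hMmemC v hv) (hMmemC w hw) (hsurj v w hv hw hne hno)
    have hindc : ∀ v w, v ∉ V1ᶜ → w ∉ V1ᶜ → ¬ G.Adj v w := by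
      intro v w hv hw
      exact hind1 v w (by simpa using hv) (by simpa using hw)
    exact auxFinal G M V1ᶜ n hM1 hMM hSc hcrossC hclc hindc
      (Fintype.equivFinOfCardEq hcVc)
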